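/- Let G be a d-regular undirected multigraph with second eigenvalue λ(G) = λ and H a c-regular graph on d vertices with λ(H) = μ. Then the derandomized square G ⓢ H is a (d·c)-regular undirected multigraph with λ(G ⓢ H) ≤ 1 − (1 − λ²)(1 − μ) ≤ λ² + μ. -/

import Mathlib

open Matrix Finset

namespace DerandAux

variable {ι : Type*} [Fintype ι]

lemma dot_self_nn (a : ι → ℝ) : 0 ≤ a ⬝ᵥ a :=
  Finset.sum_nonneg fun i _ => mul_self_nonneg _

lemma dot_cs (a b : ι → ℝ) : (a ⬝ᵥ b) ^ 2 ≤ (a ⬝ᵥ a) * (b ⬝ᵥ b) := by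
  simpa only [dotProduct, sq] using Finset.sum_mul_sq_le_sq_mul_sq Finset.univ a b

lemma dot_triangle (a b : ι → ℝ) (α β : ℝ) (hα : 0 ≤ α) (hβ : 0 ≤ β)
    (ha : a ⬝ᵥ a ≤ α ^ 2) (hb : b ⬝ᵥ b ≤ β ^ 2) :
    (a + b) ⬝ᵥ (a + b) ≤ (α + β) ^ 2 := by
  have hcs := dot_cs a b
  have h1 := dot_self_nn a
  have h2 := dot_self_nn b
  have ht2 : (a ⬝ᵥ b) ^ 2 ≤ (α * β) ^ 2 := by nlinarith
  have hab : a ⬝ᵥ b ≤ α * β := by nlinarith [mul_nonneg hα hβ]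
  have hexp : (a + b) ⬝ᵥ (a + b) = a ⬝ᵥ a + 2 * (a ⬝ᵥ b) + b ⬝ᵥ b := by
    rw [add_dotProduct, dotProduct_add, dotProduct_add, dotProduct_comm b a]; ring
  nlinarith

lemma expand_sq_sum {d : ℕ} (u : Fin d → ℝ) (c : ℝ) :
    ∑ i, (u i + c) ^ 2 = (∑ i, (u i) ^ 2) + 2 * c * (∑ i, u i) + d * c ^ 2 := by
  have h : ∀ i, (u i + c) ^ 2 = (u i) ^ 2 + 2 * c * (u i) + c ^ 2 := fun i => by ring
  simp_rw [h]
  rw [Finset.sum_add_distrib, Finset.sum_add_distrib, ← Finset.mul_sum, Finset.sum_const,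
    Finset.card_univ, Fintype.card_fin, nsmul_eq_mul]

lemma block_bound {d : ℕ} (hd : 0 < d) (B : Matrix (Fin d) (Fin d) ℝ)
    (hBsym : Bᵀ = B) (hBrow : ∀ i, ∑ j, B i j = 1) (mu : ℝ)
    (hB : ∀ w : Fin d → ℝ, ∑ i, w i = 0 → (B *ᵥ w) ⬝ᵥ (B *ᵥ w) ≤ mu ^ 2 * (w ⬝ᵥ w))
    (z : Fin d → ℝ) :
    ∑ i, (∑ j, B i j * z j - (1 - mu) / d * ∑ j, z j) ^ 2 ≤ mu ^ 2 * ∑ i, (z i) ^ 2 := by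
  have dne : (d : ℝ) ≠ 0 := Nat.cast_ne_zero.2 hd.ne'
  set s : ℝ := (∑ j, z j) / d with hs
  set w : Fin d → ℝ := fun j => z j - s with hw
  have hds : (d : ℝ) * s = ∑ j, z j := by rw [hs]; field_simp
  have hwsum : ∑ j, w j = 0 := by
    simp only [hw, Finset.sum_sub_distrib, Finset.sum_const, Finset.card_univ,
      Fintype.card_fin, nsmul_eq_mul, hds, sub_self]
  have hBsum : ∀ i, ∑ j, B i j * z j = (B *ᵥ w) i + s := by
    intro i
    simp only [mulVec, dotProduct, hw, mul_sub, Finset.sum_sub_distrib, ← Finset.sum_mul,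
      hBrow i, one_mul]
    ring
  have hterm : ∀ i, ∑ j, B i j * z j - (1 - mu) / d * ∑ j, z j = (B *ᵥ w) i + mu * s := by
    intro i
    rw [hBsum i, ← hds]
    field_simp
    ring
  simp_rw [hterm]
  have hz : ∀ i, z i = w i + s := fun i => by simp [hw]
  have hrhs : ∑ i, (z i) ^ 2 = (∑ i, (w i) ^ 2) + d * s ^ 2 := by
    simp_rw [hz]
    rw [expand_sq_sum, hwsum]; ring
  have hcol : ∑ i, (B *ᵥ w) i = 0 := by
    have hBs : ∀ i j, B i j = B j i := fun i j => by
      conv_lhs => rw [← hBsym, transpose_apply]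
    simp only [mulVec, dotProduct]
    rw [Finset.sum_comm]
    have : ∀ j, ∑ i, B i j * w j = w j := by
      intro j
      rw [← Finset.sum_mul]
      have : ∑ i, B i j = 1 := by
        rw [Finset.sum_congr rfl fun i _ => hBs i j]; exact hBrow j
      rw [this, one_mul]
    rw [Finset.sum_congr rfl fun j _ => this j, hwsum]
  rw [expand_sq_sum, hcol, hrhs]
  have hBb := hB w hwsum
  simp only [dotProduct] at hBb
  have h1 : ∑ i, ((B *ᵥ w) i) ^ 2 ≤ mu ^ 2 * ∑ i, (w i) ^ 2 := by
    simpa only [sq] using hBb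
  nlinarith [sq_nonneg s, sq_nonneg mu, Nat.cast_nonneg (α := ℝ) d]

lemma matmul_nn {l m o : Type*} [Fintype m] (A : Matrix l m ℝ) (C : Matrix m o ℝ)
    (hA : ∀ i j, 0 ≤ A i j) (hC : ∀ i j, 0 ≤ C i j) : ∀ i j, 0 ≤ (A * C) i j := by
  intro i j
  rw [Matrix.mul_apply]
  exact Finset.sum_nonneg fun k _ => mul_nonneg (hA i k) (hC k j)

end DerandAux

/-- Derandomized square (Rozenman–Vadhan): if G is a d-regular undirected multigraph on
n vertices with λ(G) = λ, given by an involutive rotation map Rot, and H is a c-regular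
graph on d vertices with symmetric doubly stochastic transition matrix B and λ(H) = μ,
then the derandomized square G ⓢ H, whose transition matrix is M̃ = P Ã B̃ Ã Q, is a
(d·c)-regular undirected multigraph (M̃ symmetric, nonnegative, doubly stochastic) with
λ(G ⓢ H) ≤ 1 − (1 − λ²)(1 − μ) ≤ λ² + μ. -/
theorem derandomized_square_expansion {n d : ℕ} (hn : 0 < n) (hd : 0 < d)
    (Rot : Fin n × Fin d → Fin n × Fin d) (hRot : Function.Involutive Rot)
    (B : Matrix (Fin d) (Fin d) ℝ) (hBsym : Bᵀ = B)
    (hBnn : ∀ i j, 0 ≤ B i j) (hBrow : ∀ i, ∑ j, B i j = 1)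
    (lam mu : ℝ) (hlam0 : 0 ≤ lam) (hlam1 : lam ≤ 1) (hmu0 : 0 ≤ mu) (hmu1 : mu ≤ 1) :
    let Q : Matrix (Fin n × Fin d) (Fin n) ℝ := fun p v => if p.1 = v then (1 : ℝ) / d else 0
    let Pm : Matrix (Fin n) (Fin n × Fin d) ℝ := fun v p => if p.1 = v then 1 else 0
    let At : Matrix (Fin n × Fin d) (Fin n × Fin d) ℝ := fun p q => if Rot p = q then 1 else 0
    let Bt : Matrix (Fin n × Fin d) (Fin n × Fin d) ℝ :=
      fun p q => if p.1 = q.1 then B p.2 q.2 else 0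
    let MG : Matrix (Fin n) (Fin n) ℝ := Pm * At * Q
    let Mds : Matrix (Fin n) (Fin n) ℝ := Pm * At * Bt * At * Q
    -- λ(G) = λ and λ(H) = μ (as bounds on the operator norm off the all-ones vector)
    (∀ v : Fin n → ℝ, ∑ i, v i = 0 → (MG *ᵥ v) ⬝ᵥ (MG *ᵥ v) ≤ lam ^ 2 * (v ⬝ᵥ v)) →
    (∀ w : Fin d → ℝ, ∑ i, w i = 0 → (B *ᵥ w) ⬝ᵥ (B *ᵥ w) ≤ mu ^ 2 * (w ⬝ᵥ w)) →
    (Mdsᵀ = Mds ∧ (∀ i j, 0 ≤ Mds i j) ∧ (∀ i, ∑ j, Mds i j = 1) ∧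
      (∀ v : Fin n → ℝ, ∑ i, v i = 0 →
        (Mds *ᵥ v) ⬝ᵥ (Mds *ᵥ v) ≤ (1 - (1 - lam ^ 2) * (1 - mu)) ^ 2 * (v ⬝ᵥ v)) ∧
      1 - (1 - lam ^ 2) * (1 - mu) ≤ lam ^ 2 + mu) := by
  intro Q Pm At Bt MG Mds hMG hB
  have dne : (d : ℝ) ≠ 0 := Nat.cast_ne_zero.2 hd.ne'
  have hBs : ∀ i j, B i j = B j i := fun i j => by
    conv_lhs => rw [← hBsym, transpose_apply]
  -- mulVec formulas
  have hQmv : ∀ v : Fin n → ℝ, Q *ᵥ v = fun p => (1 / (d : ℝ)) * v p.1 := by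
    intro v; funext p
    show (∑ u, (if p.1 = u then (1 : ℝ) / d else 0) * v u) = _
    simp
  have hPmv : ∀ x : Fin n × Fin d → ℝ, Pm *ᵥ x = fun u => ∑ i, x (u, i) := by
    intro x; funext u
    show (∑ p : Fin n × Fin d, (if p.1 = u then (1 : ℝ) else 0) * x p) = _
    rw [Fintype.sum_prod_type]
    rw [Finset.sum_eq_single u]
    · simp
    · intro v _ hvu; simp [hvu]
    · simp
  have hAtmv : ∀ x : Fin n × Fin d → ℝ, At *ᵥ x = fun p => x (Rot p) := by
    intro x; funext p
    show (∑ q, (if Rot p = q then (1 : ℝ) else 0) * x q) = x (Rot p)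
    simp
  have hBtmv : ∀ x : Fin n × Fin d → ℝ,
      Bt *ᵥ x = fun p => ∑ j, B p.2 j * x (p.1, j) := by
    intro x; funext p
    show (∑ q : Fin n × Fin d, (if p.1 = q.1 then B p.2 q.2 else 0) * x q) = _
    rw [Fintype.sum_prod_type]
    rw [Finset.sum_eq_single p.1]
    · simp
    · intro v _ hvu; simp [Ne.symm hvu]
    · simp
  -- sums
  have hQsum : ∀ v : Fin n → ℝ, ∑ p, (Q *ᵥ v) p = ∑ u, v u := by
    intro v; rw [hQmv]
    simp only [Fintype.sum_prod_type, Finset.sum_const, Finset.card_univ, Fintype.card_fin,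
      nsmul_eq_mul]
    exact Finset.sum_congr rfl fun u _ => by field_simp
  have hAtsum : ∀ x : Fin n × Fin d → ℝ, ∑ p, (At *ᵥ x) p = ∑ p, x p := by
    intro x; rw [hAtmv]
    exact Equiv.sum_comp (Function.Involutive.toPerm Rot hRot) x
  have hPsum : ∀ x : Fin n × Fin d → ℝ, ∑ u, (Pm *ᵥ x) u = ∑ p, x p := by
    intro x; rw [hPmv]
    exact (Fintype.sum_prod_type x).symm
  -- norms
  have hQnorm : ∀ v : Fin n → ℝ, (Q *ᵥ v) ⬝ᵥ (Q *ᵥ v) = (1 / (d : ℝ)) * (v ⬝ᵥ v) := by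
    intro v; rw [hQmv]
    simp only [dotProduct, Fintype.sum_prod_type, Finset.sum_const, Finset.card_univ,
      Fintype.card_fin, nsmul_eq_mul, Finset.mul_sum]
    exact Finset.sum_congr rfl fun u _ => by field_simp
  have hAtnorm : ∀ x : Fin n × Fin d → ℝ, (At *ᵥ x) ⬝ᵥ (At *ᵥ x) = x ⬝ᵥ x := by
    intro x; rw [hAtmv]
    exact Equiv.sum_comp (Function.Involutive.toPerm Rot hRot) (fun p => x p * x p)
  have hPnorm : ∀ x : Fin n × Fin d → ℝ,
      (Pm *ᵥ x) ⬝ᵥ (Pm *ᵥ x) ≤ (d : ℝ) * (x ⬝ᵥ x) := by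
    intro x; rw [hPmv]
    simp only [dotProduct, ← sq]
    calc ∑ u, (∑ i, x (u, i)) ^ 2
        ≤ ∑ u, (d : ℝ) * ∑ i, x (u, i) ^ 2 := by
          refine Finset.sum_le_sum fun u _ => ?_
          simpa using sq_sum_le_card_mul_sum_sq (s := Finset.univ) (f := fun i => x (u, i))
      _ = (d : ℝ) * ∑ p : Fin n × Fin d, x p ^ 2 := by
          rw [← Finset.mul_sum, Fintype.sum_prod_type]
  -- the matrix F
  set F : Matrix (Fin n × Fin d) (Fin n × Fin d) ℝ := Bt - (1 - mu) • (Q * Pm) with hFdef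
  have hBtd : Bt = (1 - mu) • (Q * Pm) + F := by rw [hFdef]; abel
  have hFmv : ∀ x : Fin n × Fin d → ℝ,
      F *ᵥ x = fun p => (∑ j, B p.2 j * x (p.1, j)) - (1 - mu) / d * ∑ j, x (p.1, j) := by
    intro x
    rw [hFdef, Matrix.sub_mulVec, Matrix.smul_mulVec, ← Matrix.mulVec_mulVec,
      hPmv, hQmv, hBtmv]
    funext p
    simp only [Pi.sub_apply, Pi.smul_apply, smul_eq_mul]
    ring
  have hFnorm : ∀ x : Fin n × Fin d → ℝ,
      (F *ᵥ x) ⬝ᵥ (F *ᵥ x) ≤ mu ^ 2 * (x ⬝ᵥ x) := by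
    intro x; rw [hFmv]
    simp only [dotProduct, ← sq]
    rw [Fintype.sum_prod_type, Fintype.sum_prod_type (f := fun p => x p ^ 2), Finset.mul_sum]
    refine Finset.sum_le_sum fun u _ => ?_
    simpa using DerandAux.block_bound hd B hBsym hBrow mu hB (fun j => x (u, j))
  -- symmetry
  have hQT : Qᵀ = (d : ℝ)⁻¹ • Pm := by
    funext v p
    show (if p.1 = v then (1 : ℝ) / d else 0) = (d : ℝ)⁻¹ * (if p.1 = v then (1 : ℝ) else 0)
    split_ifs <;> simp [one_div]
  have hPT : Pmᵀ = (d : ℝ) • Q := by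
    funext p v
    show (if p.1 = v then (1 : ℝ) else 0) = (d : ℝ) * (if p.1 = v then (1 : ℝ) / d else 0)
    split_ifs <;> field_simp <;> simp
  have hAT : Atᵀ = At := by
    funext p q
    show (if Rot q = p then (1 : ℝ) else 0) = (if Rot p = q then (1 : ℝ) else 0)
    have hiff : (Rot q = p) ↔ (Rot p = q) :=
      ⟨fun h => by rw [← h, hRot], fun h => by rw [← h, hRot]⟩
    simp [hiff]
  have hBT : Btᵀ = Bt := by
    funext p q
    show (if q.1 = p.1 then B q.2 p.2 else 0) = (if p.1 = q.1 then B p.2 q.2 else 0)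
    by_cases h : p.1 = q.1
    · rw [if_pos h.symm, if_pos h]; exact hBs _ _
    · rw [if_neg (fun hh => h hh.symm), if_neg h]
  have hMdsdef : Mds = Pm * At * Bt * At * Q := rfl
  have hMGdef : MG = Pm * At * Q := rfl
  have hMdsT : Mdsᵀ = Mds := by
    rw [hMdsdef, Matrix.transpose_mul, Matrix.transpose_mul, Matrix.transpose_mul,
      Matrix.transpose_mul, hQT, hPT, hAT, hBT]
    simp only [Matrix.mul_smul, Matrix.smul_mul, smul_smul, Matrix.mul_assoc]
    rw [mul_inv_cancel₀ dne, one_smul]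
  -- nonnegativity
  have hQnn : ∀ p v, 0 ≤ Q p v := by
    intro p v; show (0 : ℝ) ≤ if p.1 = v then (1 : ℝ) / d else 0
    split_ifs <;> positivity
  have hPnn : ∀ v p, 0 ≤ Pm v p := by
    intro v p; show (0 : ℝ) ≤ if p.1 = v then (1 : ℝ) else 0
    split_ifs <;> norm_num
  have hAtnn : ∀ p q, 0 ≤ At p q := by
    intro p q; show (0 : ℝ) ≤ if Rot p = q then (1 : ℝ) else 0
    split_ifs <;> norm_num
  have hBtnn : ∀ p q, 0 ≤ Bt p q := by
    intro p q; show (0 : ℝ) ≤ if p.1 = q.1 then B p.2 q.2 else 0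
    split_ifs with h
    · exact hBnn _ _
    · exact le_refl _
  have hMdsnn : ∀ i j, 0 ≤ Mds i j := fun i j =>
    DerandAux.matmul_nn _ _
      (DerandAux.matmul_nn _ _
        (DerandAux.matmul_nn _ _
          (DerandAux.matmul_nn _ _ hPnn hAtnn) hBtnn) hAtnn) hQnn i j
  -- row sums
  have hones : Mds *ᵥ (fun _ => (1 : ℝ)) = fun _ => 1 := by
    rw [hMdsdef]
    simp only [← Matrix.mulVec_mulVec]
    rw [hQmv, hAtmv, hBtmv, hAtmv, hPmv]
    funext u
    simp only
    have hinner : ∀ k : Fin d, ∑ j, B k j * ((1 / (d : ℝ)) * 1) = 1 / d := by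
      intro k
      rw [← Finset.sum_mul, hBrow k, one_mul, mul_one]
    have : ∀ i : Fin d,
        (∑ j, B (Rot (u, i)).2 j * ((1 / (d : ℝ)) * (1 : ℝ))) = 1 / d :=
      fun i => hinner _
    simp only [this]
    simp only [Finset.sum_const, Finset.card_univ, Fintype.card_fin, nsmul_eq_mul]
    field_simp
  have hrowsum : ∀ i, ∑ j, Mds i j = 1 := by
    intro i
    have h := congrFun hones i
    simpa [Matrix.mulVec, dotProduct] using h
  -- decomposition
  have hMdsEq : Mds = (1 - mu) • (MG * MG) + Pm * At * F * At * Q := by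
    rw [hMdsdef, hMGdef, hBtd]
    simp only [Matrix.mul_add, Matrix.add_mul, Matrix.mul_smul, Matrix.smul_mul,
      Matrix.mul_assoc]
  have hMGmv : ∀ v : Fin n → ℝ, MG *ᵥ v = Pm *ᵥ (At *ᵥ (Q *ᵥ v)) := by
    intro v; rw [hMGdef]; simp only [← Matrix.mulVec_mulVec]
  have hMGzero : ∀ v : Fin n → ℝ, ∑ i, v i = 0 → ∑ i, (MG *ᵥ v) i = 0 := by
    intro v hv
    rw [hMGmv, hPsum, hAtsum, hQsum, hv]
  -- spectral bound
  have hspec : ∀ v : Fin n → ℝ, ∑ i, v i = 0 →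
      (Mds *ᵥ v) ⬝ᵥ (Mds *ᵥ v) ≤ (1 - (1 - lam ^ 2) * (1 - mu)) ^ 2 * (v ⬝ᵥ v) := by
    intro v hv
    have hMds_mv : Mds *ᵥ v = (1 - mu) • (MG *ᵥ (MG *ᵥ v))
        + Pm *ᵥ (At *ᵥ (F *ᵥ (At *ᵥ (Q *ᵥ v)))) := by
      rw [hMdsEq, Matrix.add_mulVec, Matrix.smul_mulVec]
      simp only [← Matrix.mulVec_mulVec]
    set a : Fin n → ℝ := (1 - mu) • (MG *ᵥ (MG *ᵥ v)) with hadef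
    set b : Fin n → ℝ := Pm *ᵥ (At *ᵥ (F *ᵥ (At *ᵥ (Q *ᵥ v)))) with hbdef
    have h1mu : (0 : ℝ) ≤ 1 - mu := by linarith
    have hbnorm : b ⬝ᵥ b ≤ mu ^ 2 * (v ⬝ᵥ v) := by
      rw [hbdef]
      calc (Pm *ᵥ (At *ᵥ (F *ᵥ (At *ᵥ (Q *ᵥ v))))) ⬝ᵥ (Pm *ᵥ (At *ᵥ (F *ᵥ (At *ᵥ (Q *ᵥ v)))))
          ≤ (d : ℝ) * ((At *ᵥ (F *ᵥ (At *ᵥ (Q *ᵥ v)))) ⬝ᵥ (At *ᵥ (F *ᵥ (At *ᵥ (Q *ᵥ v))))) :=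
            hPnorm _
        _ = (d : ℝ) * ((F *ᵥ (At *ᵥ (Q *ᵥ v))) ⬝ᵥ (F *ᵥ (At *ᵥ (Q *ᵥ v)))) := by
            rw [hAtnorm]
        _ ≤ (d : ℝ) * (mu ^ 2 * ((At *ᵥ (Q *ᵥ v)) ⬝ᵥ (At *ᵥ (Q *ᵥ v)))) := by
            exact mul_le_mul_of_nonneg_left (hFnorm _) (Nat.cast_nonneg d)
        _ = (d : ℝ) * (mu ^ 2 * ((Q *ᵥ v) ⬝ᵥ (Q *ᵥ v))) := by rw [hAtnorm]
        _ = (d : ℝ) * (mu ^ 2 * ((1 / (d : ℝ)) * (v ⬝ᵥ v))) := by rw [hQnorm]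
        _ = mu ^ 2 * (v ⬝ᵥ v) := by field_simp
    have hanorm : a ⬝ᵥ a ≤ ((1 - mu) * lam ^ 2) ^ 2 * (v ⬝ᵥ v) := by
      have h1 : (MG *ᵥ v) ⬝ᵥ (MG *ᵥ v) ≤ lam ^ 2 * (v ⬝ᵥ v) := hMG v hv
      have h0 : ∑ i, (MG *ᵥ v) i = 0 := hMGzero v hv
      have h2 := hMG (MG *ᵥ v) h0
      have ha : a ⬝ᵥ a
          = (1 - mu) ^ 2 * ((MG *ᵥ (MG *ᵥ v)) ⬝ᵥ (MG *ᵥ (MG *ᵥ v))) := by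
        rw [hadef, smul_dotProduct, dotProduct_smul, smul_eq_mul, smul_eq_mul]
        ring
      calc a ⬝ᵥ a = (1 - mu) ^ 2 * ((MG *ᵥ (MG *ᵥ v)) ⬝ᵥ (MG *ᵥ (MG *ᵥ v))) := ha
        _ ≤ (1 - mu) ^ 2 * (lam ^ 2 * ((MG *ᵥ v) ⬝ᵥ (MG *ᵥ v))) :=
            mul_le_mul_of_nonneg_left h2 (sq_nonneg _)
        _ ≤ (1 - mu) ^ 2 * (lam ^ 2 * (lam ^ 2 * (v ⬝ᵥ v))) :=
            mul_le_mul_of_nonneg_left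
              (mul_le_mul_of_nonneg_left h1 (sq_nonneg lam)) (sq_nonneg _)
        _ = ((1 - mu) * lam ^ 2) ^ 2 * (v ⬝ᵥ v) := by ring
    set nv : ℝ := Real.sqrt (v ⬝ᵥ v) with hnv
    have hnv2 : nv ^ 2 = v ⬝ᵥ v := Real.sq_sqrt (DerandAux.dot_self_nn v)
    have hnvnn : 0 ≤ nv := Real.sqrt_nonneg _
    have hα : (0 : ℝ) ≤ (1 - mu) * lam ^ 2 * nv := by positivity
    have hβ : (0 : ℝ) ≤ mu * nv := by positivity
    have ha' : a ⬝ᵥ a ≤ ((1 - mu) * lam ^ 2 * nv) ^ 2 := by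
      rw [mul_pow, hnv2]; exact hanorm
    have hb' : b ⬝ᵥ b ≤ (mu * nv) ^ 2 := by
      rw [mul_pow, hnv2]; exact hbnorm
    have htri := DerandAux.dot_triangle a b _ _ hα hβ ha' hb'
    rw [hMds_mv]
    calc (a + b) ⬝ᵥ (a + b) ≤ ((1 - mu) * lam ^ 2 * nv + mu * nv) ^ 2 := htri
      _ = (1 - (1 - lam ^ 2) * (1 - mu)) ^ 2 * nv ^ 2 := by ring
      _ = (1 - (1 - lam ^ 2) * (1 - mu)) ^ 2 * (v ⬝ᵥ v) := by rw [hnv2]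
  refine ⟨hMdsT, hMdsnn, hrowsum, hspec, ?_⟩
  nlinarith [mul_nonneg (sq_nonneg lam) hmu0]
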